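/- For a square-summable sequence φ: ℤ² → ℂ and any (m,n) ∈ ℤ², |φ(m,n)|⁴ ≤ ‖D₂D₁φ‖_{ℓ²} · ‖D₁φ‖_{ℓ²} · ‖D₂φ‖_{ℓ²} · ‖φ‖_{ℓ²}, where all norms are over ℤ². -/

import Mathlib

noncomputable section

/-- Partial difference in the first coordinate on ℤ². -/
def D1 (φ : ℤ × ℤ → ℂ) : ℤ × ℤ → ℂ := fun p => φ (p.1 + 1, p.2) - φ p

/-- Partial difference in the second coordinate on ℤ². -/
def D2 (φ : ℤ × ℤ → ℂ) : ℤ × ℤ → ℂ := fun p => φ (p.1, p.2 + 1) - φ p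

/-- The ℓ²(ℤ²) norm. -/
def l2 (φ : ℤ × ℤ → ℂ) : ℝ := Real.sqrt (∑' p : ℤ × ℤ, ‖φ p‖ ^ 2)

open Filter

/-- Products of two square-summable nonnegative families are summable. -/
lemma summable_mul_of_sq {ι : Type*} {f g : ι → ℝ} (hf0 : ∀ i, 0 ≤ f i) (hg0 : ∀ i, 0 ≤ g i)
    (hf : Summable fun i => f i ^ 2) (hg : Summable fun i => g i ^ 2) :
    Summable fun i => f i * g i := by
  refine Summable.of_nonneg_of_le (fun i => mul_nonneg (hf0 i) (hg0 i)) (fun i => ?_)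
    ((hf.add hg).mul_left (1 / 2 : ℝ))
  have := sq_nonneg (f i - g i)
  nlinarith

/-- Cauchy–Schwarz inequality for tsums of nonnegative families. -/
lemma cs_tsum {ι : Type*} {f g : ι → ℝ} (hf0 : ∀ i, 0 ≤ f i) (hg0 : ∀ i, 0 ≤ g i)
    (hf : Summable fun i => f i ^ 2) (hg : Summable fun i => g i ^ 2) :
    ∑' i, f i * g i ≤ Real.sqrt (∑' i, f i ^ 2) * Real.sqrt (∑' i, g i ^ 2) := by
  have hfg := summable_mul_of_sq hf0 hg0 hf hg
  rw [← Real.sqrt_mul (tsum_nonneg fun i => sq_nonneg (f i))]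
  refine Summable.tsum_le_of_sum_le hfg fun s => ?_
  have h1 : (∑ i ∈ s, f i * g i) ^ 2 ≤ (∑ i ∈ s, f i ^ 2) * ∑ i ∈ s, g i ^ 2 :=
    Finset.sum_mul_sq_le_sq_mul_sq s f g
  have h2 : (∑ i ∈ s, f i ^ 2) * ∑ i ∈ s, g i ^ 2 ≤
      (∑' i, f i ^ 2) * ∑' i, g i ^ 2 := by
    refine mul_le_mul (Summable.sum_le_tsum s (fun i _ => sq_nonneg _) hf)
      (Summable.sum_le_tsum s (fun i _ => sq_nonneg _) hg)
      (Finset.sum_nonneg fun i _ => sq_nonneg _) (tsum_nonneg fun i => sq_nonneg _)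
  have h3 : 0 ≤ ∑ i ∈ s, f i * g i :=
    Finset.sum_nonneg fun i _ => mul_nonneg (hf0 i) (hg0 i)
  rw [show ∑ i ∈ s, f i * g i = Real.sqrt ((∑ i ∈ s, f i * g i) ^ 2) by
    rw [Real.sqrt_sq h3]]
  exact Real.sqrt_le_sqrt (h1.trans h2)

/-- Telescoping bound: a summable sequence on ℤ is pointwise controlled by
half of the total variation. -/
lemma half_bound {g : ℤ → ℝ} (hg : Summable g)
    (hΔ : Summable fun k => |g (k + 1) - g k|) (n : ℤ) :
    2 * g n ≤ ∑' k, |g (k + 1) - g k| := by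
  set T := ∑' k, |g (k + 1) - g k| with hT
  have key : ∀ N : ℕ, 2 * g n ≤ T + g (n + N) + g (n - N) := by
    intro N
    have t1 : ∑ j ∈ Finset.range N, (g (n + j) - g (n + (j + 1 : ℕ))) = g n - g (n + N) := by
      simpa using Finset.sum_range_sub' (fun j : ℕ => g (n + j)) N
    have t2 : ∑ j ∈ Finset.range N, (g (n - j) - g (n - (j + 1 : ℕ))) = g n - g (n - N) := by
      simpa using Finset.sum_range_sub' (fun j : ℕ => g (n - j)) N
    set S1 : Finset ℤ := (Finset.range N).image (fun j : ℕ => n + (j : ℤ)) with hS1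
    set S2 : Finset ℤ := (Finset.range N).image (fun j : ℕ => n - 1 - (j : ℤ)) with hS2
    have inj1 : Set.InjOn (fun j : ℕ => n + (j : ℤ)) (Finset.range N) := by
      intro a _ b _ hab; simp only at hab; omega
    have inj2 : Set.InjOn (fun j : ℕ => n - 1 - (j : ℤ)) (Finset.range N) := by
      intro a _ b _ hab; simp only at hab; omega
    have h1 : g n - g (n + N) ≤ ∑ k ∈ S1, |g (k + 1) - g k| := by
      rw [← t1, hS1, Finset.sum_image inj1]
      refine Finset.sum_le_sum fun j _ => ?_
      have e : n + ((j + 1 : ℕ) : ℤ) = n + (j : ℤ) + 1 := by push_cast; ring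
      rw [e]
      have := neg_le_abs (g (n + (j : ℤ) + 1) - g (n + (j : ℤ)))
      linarith
    have h2 : g n - g (n - N) ≤ ∑ k ∈ S2, |g (k + 1) - g k| := by
      rw [← t2, hS2, Finset.sum_image inj2]
      refine Finset.sum_le_sum fun j _ => ?_
      have e1 : n - 1 - (j : ℤ) + 1 = n - (j : ℤ) := by ring
      have e2 : n - ((j + 1 : ℕ) : ℤ) = n - 1 - (j : ℤ) := by push_cast; ring
      rw [e1, e2]
      exact le_abs_self _
    have hdisj : Disjoint S1 S2 := by
      rw [Finset.disjoint_left]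
      intro k hk1 hk2
      simp only [hS1, hS2, Finset.mem_image, Finset.mem_range] at hk1 hk2
      obtain ⟨a, _, ha⟩ := hk1
      obtain ⟨b, _, hb⟩ := hk2
      omega
    have hsum : ∑ k ∈ S1, |g (k + 1) - g k| + ∑ k ∈ S2, |g (k + 1) - g k| ≤ T := by
      rw [← Finset.sum_union hdisj]
      exact Summable.sum_le_tsum _ (fun k _ => abs_nonneg _) hΔ
    linarith
  have l1 : Tendsto (fun N : ℕ => g (n + (N : ℤ))) atTop (nhds 0) := by
    have hinj : Function.Injective (fun N : ℕ => n + (N : ℤ)) := by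
      intro a b hab; simp only at hab; omega
    have := hg.tendsto_cofinite_zero.comp hinj.tendsto_cofinite
    rwa [Nat.cofinite_eq_atTop] at this
  have l2' : Tendsto (fun N : ℕ => g (n - (N : ℤ))) atTop (nhds 0) := by
    have hinj : Function.Injective (fun N : ℕ => n - (N : ℤ)) := by
      intro a b hab; simp only at hab; omega
    have := hg.tendsto_cofinite_zero.comp hinj.tendsto_cofinite
    rwa [Nat.cofinite_eq_atTop] at this
  have lim : Tendsto (fun N : ℕ => T + g (n + (N : ℤ)) + g (n - (N : ℤ))) atTop
      (nhds (T + 0 + 0)) := ((tendsto_const_nhds.add l1).add l2')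
  rw [add_zero, add_zero] at lim
  exact ge_of_tendsto' lim key

/-- 1D discrete Agmon inequality. -/
lemma agmon1 {ψ : ℤ → ℂ} (hψ : Summable fun k => ‖ψ k‖ ^ 2)
    (hD : Summable fun k => ‖ψ (k + 1) - ψ k‖ ^ 2) (n : ℤ) :
    ‖ψ n‖ ^ 2 ≤ Real.sqrt (∑' k, ‖ψ (k + 1) - ψ k‖ ^ 2) * Real.sqrt (∑' k, ‖ψ k‖ ^ 2) := by
  have hshift : Summable fun k : ℤ => ‖ψ (k + 1)‖ ^ 2 :=
    ((Equiv.addRight (1 : ℤ)).summable_iff (f := fun k => ‖ψ k‖ ^ 2)).2 hψ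
  have hpt : ∀ k : ℤ, |‖ψ (k + 1)‖ ^ 2 - ‖ψ k‖ ^ 2| ≤
      ‖ψ (k + 1) - ψ k‖ * ‖ψ k‖ + ‖ψ (k + 1) - ψ k‖ * ‖ψ (k + 1)‖ := by
    intro k
    have h1 : |‖ψ (k + 1)‖ - ‖ψ k‖| ≤ ‖ψ (k + 1) - ψ k‖ := abs_norm_sub_norm_le _ _
    have h2 : |‖ψ (k + 1)‖ ^ 2 - ‖ψ k‖ ^ 2| = |‖ψ (k + 1)‖ - ‖ψ k‖| * (‖ψ (k + 1)‖ + ‖ψ k‖) := by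
      rw [← abs_of_nonneg (add_nonneg (norm_nonneg (ψ (k + 1))) (norm_nonneg (ψ k))),
        ← abs_mul]
      congr 1
      ring
    rw [h2]
    have h3 : |‖ψ (k + 1)‖ - ‖ψ k‖| * (‖ψ (k + 1)‖ + ‖ψ k‖) ≤
        ‖ψ (k + 1) - ψ k‖ * (‖ψ (k + 1)‖ + ‖ψ k‖) :=
      mul_le_mul_of_nonneg_right h1 (add_nonneg (norm_nonneg _) (norm_nonneg _))
    linarith [h3]
  have hs1 : Summable fun k : ℤ => ‖ψ (k + 1) - ψ k‖ * ‖ψ k‖ :=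
    summable_mul_of_sq (fun _ => norm_nonneg _) (fun _ => norm_nonneg _) hD hψ
  have hs2 : Summable fun k : ℤ => ‖ψ (k + 1) - ψ k‖ * ‖ψ (k + 1)‖ :=
    summable_mul_of_sq (fun _ => norm_nonneg _) (fun _ => norm_nonneg _) hD hshift
  have hΔ : Summable fun k : ℤ => |‖ψ (k + 1)‖ ^ 2 - ‖ψ k‖ ^ 2| :=
    Summable.of_nonneg_of_le (fun _ => abs_nonneg _) hpt (hs1.add hs2)
  have key := half_bound hψ hΔ n
  have hbound : (∑' k : ℤ, |‖ψ (k + 1)‖ ^ 2 - ‖ψ k‖ ^ 2|) ≤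
      (∑' k, ‖ψ (k + 1) - ψ k‖ * ‖ψ k‖) + ∑' k, ‖ψ (k + 1) - ψ k‖ * ‖ψ (k + 1)‖ := by
    rw [← Summable.tsum_add hs1 hs2]
    exact Summable.tsum_le_tsum hpt hΔ (hs1.add hs2)
  have cs1 : (∑' k, ‖ψ (k + 1) - ψ k‖ * ‖ψ k‖) ≤
      Real.sqrt (∑' k, ‖ψ (k + 1) - ψ k‖ ^ 2) * Real.sqrt (∑' k, ‖ψ k‖ ^ 2) :=
    cs_tsum (fun _ => norm_nonneg _) (fun _ => norm_nonneg _) hD hψ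
  have cs2 : (∑' k, ‖ψ (k + 1) - ψ k‖ * ‖ψ (k + 1)‖) ≤
      Real.sqrt (∑' k, ‖ψ (k + 1) - ψ k‖ ^ 2) * Real.sqrt (∑' k, ‖ψ (k + 1)‖ ^ 2) :=
    cs_tsum (fun _ => norm_nonneg _) (fun _ => norm_nonneg _) hD hshift
  have heq : (∑' k : ℤ, ‖ψ (k + 1)‖ ^ 2) = ∑' k : ℤ, ‖ψ k‖ ^ 2 :=
    (Equiv.addRight (1 : ℤ)).tsum_eq (f := fun k => ‖ψ k‖ ^ 2)
  rw [heq] at cs2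
  linarith

/-- Row-sum Agmon inequality in the second coordinate. -/
lemma rowsum {ψ : ℤ × ℤ → ℂ} (hψ : Summable fun p : ℤ × ℤ => ‖ψ p‖ ^ 2)
    (hD : Summable fun p : ℤ × ℤ => ‖ψ (p.1, p.2 + 1) - ψ p‖ ^ 2) (n : ℤ) :
    (∑' i : ℤ, ‖ψ (i, n)‖ ^ 2) ≤
      Real.sqrt (∑' p : ℤ × ℤ, ‖ψ (p.1, p.2 + 1) - ψ p‖ ^ 2) *
        Real.sqrt (∑' p : ℤ × ℤ, ‖ψ p‖ ^ 2) := by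
  -- work with swapped coordinates q = (n, i)
  set A : ℤ × ℤ → ℝ := fun q => ‖ψ (q.2, q.1 + 1) - ψ (q.2, q.1)‖ with hA
  set B : ℤ × ℤ → ℝ := fun q => ‖ψ (q.2, q.1)‖ with hB
  set C : ℤ × ℤ → ℝ := fun q => ‖ψ (q.2, q.1 + 1)‖ with hC
  have hA2 : Summable fun q => A q ^ 2 := hD.prod_symm
  have hB2 : Summable fun q => B q ^ 2 := hψ.prod_symm
  have hC2 : Summable fun q => C q ^ 2 := by
    have := (((Equiv.addRight (1 : ℤ)).prodCongr (Equiv.refl ℤ)).summable_iff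
      (f := fun q : ℤ × ℤ => B q ^ 2)).2 hB2
    simpa [hB, hC, Function.comp_def, Prod.map_apply, Equiv.prodCongr_apply, Equiv.coe_addRight] using this
  have hC2eq : (∑' q, C q ^ 2) = ∑' q, B q ^ 2 := by
    have := ((Equiv.addRight (1 : ℤ)).prodCongr (Equiv.refl ℤ)).tsum_eq
      (f := fun q : ℤ × ℤ => B q ^ 2)
    simpa [hB, hC, Function.comp, Equiv.prodCongr_apply, Equiv.coe_addRight] using this
  have hAB : Summable fun q => A q * B q :=
    summable_mul_of_sq (fun _ => norm_nonneg _) (fun _ => norm_nonneg _) hA2 hB2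
  have hAC : Summable fun q => A q * C q :=
    summable_mul_of_sq (fun _ => norm_nonneg _) (fun _ => norm_nonneg _) hA2 hC2
  have hH : Summable fun q => A q * B q + A q * C q := hAB.add hAC
  set g : ℤ → ℝ := fun n => ∑' i : ℤ, ‖ψ (i, n)‖ ^ 2 with hgdef
  have hg : Summable g := hB2.prod
  have hfib : ∀ n : ℤ, Summable fun i : ℤ => ‖ψ (i, n)‖ ^ 2 := by
    intro n
    exact hψ.comp_injective (i := fun i : ℤ => ((i, n) : ℤ × ℤ))
      (fun a b hab => (Prod.ext_iff.1 hab).1)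
  have hptΔ : ∀ k : ℤ, |g (k + 1) - g k| ≤
      ∑' i : ℤ, (A (k, i) * B (k, i) + A (k, i) * C (k, i)) := by
    intro k
    have hptfib : ∀ i : ℤ, |‖ψ (i, k + 1)‖ ^ 2 - ‖ψ (i, k)‖ ^ 2| ≤
        A (k, i) * B (k, i) + A (k, i) * C (k, i) := by
      intro i
      have h1 : |‖ψ (i, k + 1)‖ - ‖ψ (i, k)‖| ≤ ‖ψ (i, k + 1) - ψ (i, k)‖ :=
        abs_norm_sub_norm_le _ _
      have h2 : |‖ψ (i, k + 1)‖ ^ 2 - ‖ψ (i, k)‖ ^ 2| =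
          |‖ψ (i, k + 1)‖ - ‖ψ (i, k)‖| * (‖ψ (i, k + 1)‖ + ‖ψ (i, k)‖) := by
        rw [← abs_of_nonneg (add_nonneg (norm_nonneg (ψ (i, k + 1))) (norm_nonneg (ψ (i, k)))),
          ← abs_mul]
        congr 1; ring
      rw [h2]
      have h3 := mul_le_mul_of_nonneg_right h1
        (add_nonneg (norm_nonneg (ψ (i, k + 1))) (norm_nonneg (ψ (i, k))))
      simp only [hA, hB, hC]
      nlinarith [h3]
    have habs : Summable fun i : ℤ => |‖ψ (i, k + 1)‖ ^ 2 - ‖ψ (i, k)‖ ^ 2| :=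
      Summable.of_nonneg_of_le (fun _ => abs_nonneg _) hptfib (hH.prod_factor k)
    have e1 : g (k + 1) - g k = ∑' i : ℤ, (‖ψ (i, k + 1)‖ ^ 2 - ‖ψ (i, k)‖ ^ 2) := by
      rw [hgdef]
      exact (Summable.tsum_sub (hfib (k + 1)) (hfib k)).symm
    rw [e1]
    calc |∑' i : ℤ, (‖ψ (i, k + 1)‖ ^ 2 - ‖ψ (i, k)‖ ^ 2)|
        ≤ ∑' i : ℤ, |‖ψ (i, k + 1)‖ ^ 2 - ‖ψ (i, k)‖ ^ 2| := by
          simpa [Real.norm_eq_abs] using norm_tsum_le_tsum_norm (f := fun i : ℤ =>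
            ‖ψ (i, k + 1)‖ ^ 2 - ‖ψ (i, k)‖ ^ 2) (by simpa [Real.norm_eq_abs] using habs)
      _ ≤ ∑' i : ℤ, (A (k, i) * B (k, i) + A (k, i) * C (k, i)) :=
          Summable.tsum_le_tsum hptfib habs (hH.prod_factor k)
  have hΔ : Summable fun k : ℤ => |g (k + 1) - g k| :=
    Summable.of_nonneg_of_le (fun _ => abs_nonneg _) hptΔ hH.prod
  have key := half_bound hg hΔ n
  have hsum1 : (∑' k : ℤ, |g (k + 1) - g k|) ≤
      ∑' k : ℤ, ∑' i : ℤ, (A (k, i) * B (k, i) + A (k, i) * C (k, i)) :=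
    Summable.tsum_le_tsum hptΔ hΔ hH.prod
  have hsum2 : (∑' k : ℤ, ∑' i : ℤ, (A (k, i) * B (k, i) + A (k, i) * C (k, i))) =
      ∑' q : ℤ × ℤ, (A q * B q + A q * C q) := (Summable.tsum_prod hH).symm
  have hsum3 : (∑' q : ℤ × ℤ, (A q * B q + A q * C q)) =
      (∑' q, A q * B q) + ∑' q, A q * C q := Summable.tsum_add hAB hAC
  have cs1 : (∑' q, A q * B q) ≤ Real.sqrt (∑' q, A q ^ 2) * Real.sqrt (∑' q, B q ^ 2) :=
    cs_tsum (fun _ => norm_nonneg _) (fun _ => norm_nonneg _) hA2 hB2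
  have cs2 : (∑' q, A q * C q) ≤ Real.sqrt (∑' q, A q ^ 2) * Real.sqrt (∑' q, C q ^ 2) :=
    cs_tsum (fun _ => norm_nonneg _) (fun _ => norm_nonneg _) hA2 hC2
  rw [hC2eq] at cs2
  have hAeq : (∑' q, A q ^ 2) = ∑' p : ℤ × ℤ, ‖ψ (p.1, p.2 + 1) - ψ p‖ ^ 2 := by
    have h := (Equiv.prodComm ℤ ℤ).tsum_eq (f := fun q : ℤ × ℤ => A q ^ 2)
    rw [← h]
    rfl
  have hBeq : (∑' q, B q ^ 2) = ∑' p : ℤ × ℤ, ‖ψ p‖ ^ 2 := by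
    have h := (Equiv.prodComm ℤ ℤ).tsum_eq (f := fun q : ℤ × ℤ => B q ^ 2)
    rw [← h]
    rfl
  rw [hAeq, hBeq] at cs1 cs2
  show g n ≤ _
  linarith

/-- Pointwise 2D product estimate. -/
theorem agmon_2d_pointwise (φ : ℤ × ℤ → ℂ) (h : Summable fun p : ℤ × ℤ => ‖φ p‖ ^ 2)
    (m n : ℤ) :
    ‖φ (m, n)‖ ^ 4 ≤ l2 (D2 (D1 φ)) * l2 (D1 φ) * l2 (D2 φ) * l2 φ := by
  -- summability of shifted and differenced families
  have hsh1 : Summable fun p : ℤ × ℤ => ‖φ (p.1 + 1, p.2)‖ ^ 2 := by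
    have := (((Equiv.addRight (1 : ℤ)).prodCongr (Equiv.refl ℤ)).summable_iff
      (f := fun p : ℤ × ℤ => ‖φ p‖ ^ 2)).2 h
    simpa [Function.comp_def, Prod.map, Equiv.prodCongr_apply, Equiv.coe_addRight] using this
  have hsh2 : Summable fun p : ℤ × ℤ => ‖φ (p.1, p.2 + 1)‖ ^ 2 := by
    have := (((Equiv.refl ℤ).prodCongr (Equiv.addRight (1 : ℤ))).summable_iff
      (f := fun p : ℤ × ℤ => ‖φ p‖ ^ 2)).2 h
    simpa [Function.comp_def, Prod.map, Equiv.prodCongr_apply, Equiv.coe_addRight] using this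
  have diffbound : ∀ u v : ℂ, ‖u - v‖ ^ 2 ≤ 2 * ‖u‖ ^ 2 + 2 * ‖v‖ ^ 2 := by
    intro u v
    have h1 : ‖u - v‖ ≤ ‖u‖ + ‖v‖ := norm_sub_le u v
    have h2 : ‖u - v‖ ^ 2 ≤ (‖u‖ + ‖v‖) ^ 2 := pow_le_pow_left₀ (norm_nonneg _) h1 2
    nlinarith [sq_nonneg (‖u‖ - ‖v‖)]
  have hD1 : Summable fun p : ℤ × ℤ => ‖D1 φ p‖ ^ 2 := by
    refine Summable.of_nonneg_of_le (fun _ => sq_nonneg _) (fun p => diffbound _ _)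
      (((hsh1.mul_left 2)).add ((h.mul_left 2)))
  have hD2 : Summable fun p : ℤ × ℤ => ‖D2 φ p‖ ^ 2 := by
    refine Summable.of_nonneg_of_le (fun _ => sq_nonneg _) (fun p => diffbound _ _)
      (((hsh2.mul_left 2)).add ((h.mul_left 2)))
  have hD1sh2 : Summable fun p : ℤ × ℤ => ‖D1 φ (p.1, p.2 + 1)‖ ^ 2 := by
    have := (((Equiv.refl ℤ).prodCongr (Equiv.addRight (1 : ℤ))).summable_iff
      (f := fun p : ℤ × ℤ => ‖D1 φ p‖ ^ 2)).2 hD1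
    simpa [Function.comp_def, Prod.map, Equiv.prodCongr_apply, Equiv.coe_addRight] using this
  have hD21 : Summable fun p : ℤ × ℤ => ‖D2 (D1 φ) p‖ ^ 2 := by
    refine Summable.of_nonneg_of_le (fun _ => sq_nonneg _) (fun p => diffbound _ _)
      (((hD1sh2.mul_left 2)).add ((hD1.mul_left 2)))
  -- Step A: 1D Agmon in the first coordinate
  have hrow : Summable fun i : ℤ => ‖φ (i, n)‖ ^ 2 :=
    h.comp_injective (i := fun i : ℤ => ((i, n) : ℤ × ℤ))
      (fun a b hab => (Prod.ext_iff.1 hab).1)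
  have hrowD : Summable fun i : ℤ => ‖φ (i + 1, n) - φ (i, n)‖ ^ 2 := by
    have := hD1.comp_injective (i := fun i : ℤ => ((i, n) : ℤ × ℤ))
      (fun a b hab => (Prod.ext_iff.1 hab).1)
    simpa [D1, Function.comp_def] using this
  have stepA := agmon1 (ψ := fun i : ℤ => φ (i, n)) hrow hrowD m
  -- Step B/C: rowsum bounds
  have stepB := rowsum (ψ := D1 φ) hD1 (by simpa [D2] using hD21) n
  have stepC := rowsum (ψ := φ) h (by simpa [D2] using hD2) n
  -- assemble
  set P1 := ∑' i : ℤ, ‖φ (i + 1, n) - φ (i, n)‖ ^ 2 with hP1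
  set P2 := ∑' i : ℤ, ‖φ (i, n)‖ ^ 2 with hP2
  have hP1nn : 0 ≤ P1 := tsum_nonneg fun _ => sq_nonneg _
  have hP2nn : 0 ≤ P2 := tsum_nonneg fun _ => sq_nonneg _
  have step4 : ‖φ (m, n)‖ ^ 4 ≤ P1 * P2 := by
    have h2 : ‖φ (m, n)‖ ^ 2 ≤ Real.sqrt P1 * Real.sqrt P2 := stepA
    calc ‖φ (m, n)‖ ^ 4 = (‖φ (m, n)‖ ^ 2) ^ 2 := by ring
      _ ≤ (Real.sqrt P1 * Real.sqrt P2) ^ 2 := pow_le_pow_left₀ (sq_nonneg _) h2 2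
      _ = P1 * P2 := by
          rw [mul_pow, Real.sq_sqrt hP1nn, Real.sq_sqrt hP2nn]
  have hP1le : P1 ≤ l2 (D2 (D1 φ)) * l2 (D1 φ) := by
    have heq : P1 = ∑' i : ℤ, ‖D1 φ (i, n)‖ ^ 2 := by
      simp only [hP1, D1]
    rw [heq]
    exact stepB
  have hP2le : P2 ≤ l2 (D2 φ) * l2 φ := stepC
  have final : P1 * P2 ≤ (l2 (D2 (D1 φ)) * l2 (D1 φ)) * (l2 (D2 φ) * l2 φ) := by
    apply mul_le_mul hP1le hP2le hP2nn
    exact mul_nonneg (Real.sqrt_nonneg _) (Real.sqrt_nonneg _)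
  calc ‖φ (m, n)‖ ^ 4 ≤ P1 * P2 := step4
    _ ≤ (l2 (D2 (D1 φ)) * l2 (D1 φ)) * (l2 (D2 φ) * l2 φ) := final
    _ = l2 (D2 (D1 φ)) * l2 (D1 φ) * l2 (D2 φ) * l2 φ := by ring
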